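/- Let X be the constructed set, fix a coordinate j with 1 ≤ j ≤ d. Then exactly r−1 points x of X satisfy x_j > 0 (namely the points of A_j), and exactly r−1 points x of X satisfy x_j < 0 (namely the points x^i with i ≠ i(j)). -/
import Mathlib


open Finset Set

/-- The standard basis vector `e^j` of `ℝ^d`. -/
noncomputable def stdVec (d : ℕ) (j : Fin d) : Fin d → ℝ := Pi.single j 1

/-- The set `A_j = {e^j, 2e^j, ..., (r-1)e^j}`. -/
def Aset (d r : ℕ) (j : Fin d) : Set (Fin d → ℝ) :=
  {v | ∃ k : ℕ, 1 ≤ k ∧ k ≤ r - 1 ∧ v = (k : ℝ) • stdVec d j}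

/-- The point `x^i`, with `x^i_j = 0` if `i = i(j)` and `x^i_j = -i` otherwise
(indices taken in `{1,...,r}`, so `Fin r` index `i` corresponds to `i+1`). -/
def xpt (d r : ℕ) (ι : Fin d → Fin r) (i : Fin r) : Fin d → ℝ :=
  fun j => if ι j = i then 0 else -((i : ℕ) + 1 : ℝ)

/-- The set `A = {x^1, ..., x^r}`. -/
def Apts (d r : ℕ) (ι : Fin d → Fin r) : Set (Fin d → ℝ) := Set.range (xpt d r ι)

/-- The constructed set `X = A ∪ A_1 ∪ ⋯ ∪ A_d`. -/
def Xset (d r : ℕ) (ι : Fin d → Fin r) : Set (Fin d → ℝ) :=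
  Apts d r ι ∪ ⋃ j, Aset d r j

/-- `P : Fin r → Set (Fin d → ℝ)` is a Tverberg partition of `X`:
a partition of `X` into pairwise disjoint parts whose convex hulls share a point. -/
def IsTverbergPartition (d r : ℕ) (X : Set (Fin d → ℝ))
    (P : Fin r → Set (Fin d → ℝ)) : Prop :=
  (⋃ i, P i) = X ∧ (∀ i i', i ≠ i' → Disjoint (P i) (P i')) ∧
    ∃ p : Fin d → ℝ, ∀ i, p ∈ convexHull ℝ (P i)

/-- In the constructed set `X`, for each coordinate `j`, exactly `r-1` points have
positive `j`-th coordinate (namely the points of `A_j`), and exactly `r-1` points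
have negative `j`-th coordinate (namely the points `x^i` with `i ≠ i(j)`). -/
theorem signed_points_in_coordinate (d r : ℕ) (hd : 1 ≤ d) (hr : 1 ≤ r)
    (a : Fin r → ℕ) (hpos : ∀ i, 1 ≤ a i) (hle : ∀ i, a i ≤ d + 1)
    (hsum : ∑ i, a i = (d + 1) * (r - 1) + 1)
    (ι : Fin d → Fin r)
    (hι : ∀ i, (Finset.univ.filter fun j => ι j = i).card = d + 1 - a i)
    (j : Fin d) :
    {x ∈ Xset d r ι | 0 < x j} = Aset d r j ∧
    {x ∈ Xset d r ι | 0 < x j}.ncard = r - 1 ∧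
    {x ∈ Xset d r ι | x j < 0} = {v | ∃ i : Fin r, i ≠ ι j ∧ v = xpt d r ι i} ∧
    {x ∈ Xset d r ι | x j < 0}.ncard = r - 1 := by

  have hAsub : Aset d r j ⊆ Xset d r ι := fun v hv =>
    Or.inr (Set.mem_iUnion.mpr ⟨j, hv⟩)
  have hpos_eq : {x ∈ Xset d r ι | 0 < x j} = Aset d r j := by
    ext x
    simp only [Set.mem_setOf_eq]
    constructor
    · rintro ⟨hx, hxj⟩
      rcases hx with ⟨i, rfl⟩ | hx
      · exfalso
        simp only [xpt] at hxj
        split_ifs at hxj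
        · exact lt_irrefl 0 hxj
        · have : (0:ℝ) < ((i:ℕ):ℝ) + 1 := by positivity
          linarith
      · rcases Set.mem_iUnion.mp hx with ⟨j', hj'⟩
        obtain ⟨k, hk1, hk2, rfl⟩ := hj'
        by_cases h : j' = j
        · subst h; exact ⟨k, hk1, hk2, rfl⟩
        · exfalso
          simp only [Pi.smul_apply, stdVec, Pi.single_eq_of_ne' h, smul_zero] at hxj
          exact lt_irrefl 0 hxj
    · rintro ⟨k, hk1, hk2, rfl⟩
      refine ⟨hAsub ⟨k, hk1, hk2, rfl⟩, ?_⟩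
      simp only [Pi.smul_apply, stdVec, Pi.single_eq_same, smul_eq_mul, mul_one]
      exact_mod_cast hk1
  have hneg_eq : {x ∈ Xset d r ι | x j < 0}
      = {v | ∃ i : Fin r, i ≠ ι j ∧ v = xpt d r ι i} := by
    ext x
    simp only [Set.mem_setOf_eq]
    constructor
    · rintro ⟨hx, hxj⟩
      rcases hx with ⟨i, rfl⟩ | hx
      · refine ⟨i, ?_, rfl⟩
        intro h
        simp only [xpt, h, if_pos rfl] at hxj
        exact lt_irrefl 0 hxj
      · exfalso
        rcases Set.mem_iUnion.mp hx with ⟨j', hj'⟩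
        obtain ⟨k, hk1, hk2, rfl⟩ := hj'
        have : (0:ℝ) ≤ ((k : ℝ) • stdVec d j') j := by
          by_cases h : j' = j
          · subst h
            simp only [Pi.smul_apply, stdVec, Pi.single_eq_same, smul_eq_mul, mul_one]
            positivity
          · simp [stdVec, Pi.single_eq_of_ne' h]
        linarith
    · rintro ⟨i, hi, rfl⟩
      have hval : xpt d r ι i j = -((i:ℕ) + 1 : ℝ) := by
        simp only [xpt]
        rw [if_neg (fun h => hi h.symm)]
      refine ⟨Or.inl ⟨i, rfl⟩, ?_⟩
      rw [hval]
      have : (0:ℝ) < ((i:ℕ):ℝ) + 1 := by positivity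
      linarith
  refine ⟨hpos_eq, ?_, hneg_eq, ?_⟩
  · rw [hpos_eq]
    have himg : Aset d r j = (fun k : ℕ => (k : ℝ) • stdVec d j) '' (Set.Icc 1 (r-1)) := by
      ext v
      constructor
      · rintro ⟨k, hk1, hk2, rfl⟩; exact ⟨k, ⟨hk1, hk2⟩, rfl⟩
      · rintro ⟨k, ⟨hk1, hk2⟩, rfl⟩; exact ⟨k, hk1, hk2, rfl⟩
    have hinj : Set.InjOn (fun k : ℕ => (k : ℝ) • stdVec d j) (Set.Icc 1 (r-1)) := by
      intro k _ k' _ h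
      have := congrFun h j
      simp only [Pi.smul_apply, stdVec, Pi.single_eq_same, smul_eq_mul, mul_one] at this
      exact_mod_cast this
    rw [himg, Set.ncard_image_of_injOn hinj, ← Finset.coe_Icc, Set.ncard_coe_finset,
      Nat.card_Icc]
    omega
  · rw [hneg_eq]
    have himg : {v | ∃ i : Fin r, i ≠ ι j ∧ v = xpt d r ι i}
        = xpt d r ι '' {i | i ≠ ι j} := by
      ext v
      constructor
      · rintro ⟨i, hi, rfl⟩; exact ⟨i, hi, rfl⟩
      · rintro ⟨i, hi, rfl⟩; exact ⟨i, hi, rfl⟩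
    have hinj : Set.InjOn (xpt d r ι) {i | i ≠ ι j} := by
      intro i hi i' hi' h
      have hi : i ≠ ι j := hi
      have hi' : i' ≠ ι j := hi'
      have := congrFun h j
      simp only [xpt, if_neg (Ne.symm hi), if_neg (Ne.symm hi')] at this
      have : ((i:ℕ):ℝ) = ((i':ℕ):ℝ) := by linarith
      have : (i:ℕ) = (i':ℕ) := by exact_mod_cast this
      exact Fin.ext this
    have hset : {i : Fin r | i ≠ ι j} = ↑(Finset.univ.erase (ι j)) := by
      ext i; simp
    rw [himg, Set.ncard_image_of_injOn hinj, hset, Set.ncard_coe_finset,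
      Finset.card_erase_of_mem (Finset.mem_univ _), Finset.card_univ, Fintype.card_fin]
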